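/- arXiv:1912.03921 — 3 statements merged into one kernel-verified Lean document; each statement's English description precedes it below -/
import Mathlib

section
/- Let σ be the logistic sigmoid, let c̄ ∈ [−1,1]^d with ‖c̄‖ = 1, let g : ℝ → ℝ be (p,C)-smooth with p ∈ (0,1], C > 0, let A ≥ 1, ρ > 0, n, K ∈ ℕ with K ≥ 2, and let b₁ < ⋯ < b_K satisfy b₁ ≤ −A√d, b_K ≥ A√d − 4A√d/(K−1), and A√d/((n+1)(K−1)) ≤ |b_{k+1} − b_k| ≤ 4A√d/(K−1) for all k. With a₀ = g(b₁) and a_k = g(b_k) − g(b_{k−1}), we have sup_{x ∈ [−A,A]^d} |a₀ + Σ_{k=1}^K a_k·σ(ρ·(c̄ᵀx − b_k)) − g(c̄ᵀx)| ≤ 3·(4A√d)^p·C/(K−1)^p + C·(4A√d)^p·(K−1)^{1−p}·exp(−ρ·A√d/((n+1)(K−1))). -/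
open Finset Real

private lemma sig_nonneg' (t : ℝ) : 0 ≤ 1 / (1 + Real.exp t) := by positivity

private lemma sig_le_one' (t : ℝ) : 1 / (1 + Real.exp t) ≤ 1 := by
  rw [div_le_one (by positivity)]
  have := Real.exp_pos t
  linarith

private lemma sig_le_exp' (t : ℝ) : 1 / (1 + Real.exp (-t)) ≤ Real.exp t := by
  rw [div_le_iff₀ (by positivity)]
  have h : Real.exp t * Real.exp (-t) = 1 := by rw [← Real.exp_add]; simp
  nlinarith [Real.exp_pos t, Real.exp_pos (-t)]

private lemma one_sub_sig_le_exp' (t : ℝ) :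
    1 - 1 / (1 + Real.exp (-t)) ≤ Real.exp (-t) := by
  have h0 : (0:ℝ) < 1 + Real.exp (-t) := by positivity
  have h : 1 - 1 / (1 + Real.exp (-t)) = Real.exp (-t) / (1 + Real.exp (-t)) := by
    field_simp
    ring
  rw [h]
  exact div_le_self (Real.exp_pos _).le (by nlinarith [Real.exp_pos (-t)])

set_option maxHeartbeats 1000000 in
open Finset Real in
theorem network_approx_holder
    (d : ℕ) (A : ℝ) (hA : 1 ≤ A)
    (c : Fin d → ℝ) (hc1 : ∀ j, |c j| ≤ 1)
    (hcnorm : Real.sqrt (∑ j : Fin d, (c j) ^ 2) = 1)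
    (g : ℝ → ℝ) (p C : ℝ) (hp : 0 < p) (hp1 : p ≤ 1) (hC : 0 < C)
    (hg : ∀ x z : ℝ, |g x - g z| ≤ C * |x - z| ^ p)
    (ρ : ℝ) (hρ : 0 < ρ) (n K : ℕ) (hK : 2 ≤ K)
    (b : ℕ → ℝ)
    (hb0 : b 0 = b 1)
    (hmono : ∀ k, 1 ≤ k → k < K → b k < b (k + 1))
    (hb1 : b 1 ≤ -A * Real.sqrt d)
    (hbK : b K ≥ A * Real.sqrt d - 4 * A * Real.sqrt d / (K - 1))
    (hgaplo : ∀ k, 1 ≤ k → k ≤ K - 1 →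
      A * Real.sqrt d / ((n + 1) * (K - 1)) ≤ |b (k + 1) - b k|)
    (hgaphi : ∀ k, 1 ≤ k → k ≤ K - 1 →
      |b (k + 1) - b k| ≤ 4 * A * Real.sqrt d / (K - 1))
    (a : ℕ → ℝ)
    (ha0 : a 0 = g (b 1))
    (ha : ∀ k, 1 ≤ k → k ≤ K → a k = g (b k) - g (b (k - 1)))
    (x : Fin d → ℝ) (hx : ∀ j, |x j| ≤ A) :
    |a 0 + (∑ k ∈ Finset.Icc 1 K,
        a k * (1 / (1 + Real.exp (-(ρ * ((∑ j : Fin d, c j * x j) - b k))))))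
      - g (∑ j : Fin d, c j * x j)|
      ≤ 3 * (4 * A * Real.sqrt d) ^ p * C / ((K : ℝ) - 1) ^ p
        + C * (4 * A * Real.sqrt d) ^ p * ((K : ℝ) - 1) ^ (1 - p)
          * Real.exp (-(ρ * (A * Real.sqrt d) / ((n + 1) * (K - 1)))) := by
  set u := ∑ j : Fin d, c j * x j with hu
  -- basic positivity facts
  have hA0 : 0 < A := by linarith
  have hd1 : 1 ≤ Real.sqrt d := by
    rcases Nat.eq_zero_or_pos d with hd0 | hd0
    · subst hd0; simp at hcnorm
    · rw [Real.one_le_sqrt]; exact_mod_cast hd0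
  have hD1 : 1 ≤ A * Real.sqrt d := by nlinarith
  have hD0 : 0 < A * Real.sqrt d := by linarith
  have hK1 : (0:ℝ) < (K:ℝ) - 1 := by
    have : (2:ℝ) ≤ (K:ℝ) := by exact_mod_cast hK
    linarith
  -- Cauchy-Schwarz : |u| ≤ A √d
  have huD : |u| ≤ A * Real.sqrt d := by
    have hcs : u ^ 2 ≤ (∑ j : Fin d, (c j) ^ 2) * (∑ j : Fin d, (x j) ^ 2) :=
      Finset.sum_mul_sq_le_sq_mul_sq _ _ _
    have hx2 : (∑ j : Fin d, (x j) ^ 2) ≤ (d : ℝ) * A ^ 2 := by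
      calc (∑ j : Fin d, (x j) ^ 2) ≤ ∑ _j : Fin d, A ^ 2 := by
            refine Finset.sum_le_sum fun j _ => ?_
            have h1 := hx j
            have h2 : |x j| ^ 2 = x j ^ 2 := sq_abs _
            nlinarith [abs_nonneg (x j)]
        _ = (d : ℝ) * A ^ 2 := by simp [Finset.sum_const, Finset.card_univ]; try ring
    have h1 : |u| = Real.sqrt (u ^ 2) := (Real.sqrt_sq_eq_abs u).symm
    rw [h1]
    calc Real.sqrt (u ^ 2)
        ≤ Real.sqrt ((∑ j : Fin d, (c j) ^ 2) * (∑ j : Fin d, (x j) ^ 2)) :=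
          Real.sqrt_le_sqrt hcs
      _ = Real.sqrt (∑ j : Fin d, (c j) ^ 2) * Real.sqrt (∑ j : Fin d, (x j) ^ 2) :=
          Real.sqrt_mul (Finset.sum_nonneg fun j _ => sq_nonneg _) _
      _ = Real.sqrt (∑ j : Fin d, (x j) ^ 2) := by rw [hcnorm, one_mul]
      _ ≤ Real.sqrt ((d : ℝ) * A ^ 2) := Real.sqrt_le_sqrt hx2
      _ = A * Real.sqrt d := by
          rw [Real.sqrt_mul (by positivity), Real.sqrt_sq hA0.le]; ring
  have huabs := abs_le.mp huD
  -- monotonicity of b on [1, K]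
  have hble : ∀ i j, 1 ≤ i → i ≤ j → j ≤ K → b i ≤ b j := by
    intro i j h1 hij
    induction j with
    | zero => intro _; exact absurd hij (by omega)
    | succ j ih =>
      intro hjK
      rcases Nat.eq_or_lt_of_le hij with h | h
      · exact le_of_eq (by rw [h])
      · have hij' : i ≤ j := by omega
        exact (ih hij' (by omega)).trans (hmono j (by omega) (by omega)).le
  set ε : ℝ := A * Real.sqrt d / ((n + 1) * ((K:ℝ) - 1)) with hε
  set δ : ℝ := 4 * A * Real.sqrt d / ((K:ℝ) - 1) with hδ
  have hδ0 : 0 < δ := by rw [hδ]; positivity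
  have hCδ : 0 ≤ C * δ ^ p := mul_nonneg hC.le (Real.rpow_nonneg hδ0.le p)
  have hE0 : 0 ≤ C * δ ^ p * Real.exp (-(ρ * ε)) :=
    mul_nonneg hCδ (Real.exp_pos _).le
  -- the maximal index m with b m ≤ u
  have h1mem : (1:ℕ) ∈ (Finset.Ioc 0 K).filter (fun k => b k ≤ u) := by
    refine Finset.mem_filter.mpr ⟨Finset.mem_Ioc.mpr ⟨one_pos, by omega⟩, ?_⟩
    have : -A * Real.sqrt d ≤ u := by
      have := huabs.1; linarith
    linarith
  obtain ⟨m, hmT, hmax'⟩ :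
      ∃ m, m ∈ (Finset.Ioc 0 K).filter (fun k => b k ≤ u) ∧
        ∀ k ∈ (Finset.Ioc 0 K).filter (fun k => b k ≤ u), k ≤ m :=
    ⟨_, Finset.max'_mem _ ⟨1, h1mem⟩, fun k hk => Finset.le_max' _ k hk⟩
  rw [Finset.mem_filter, Finset.mem_Ioc] at hmT
  obtain ⟨⟨hm0, hmK⟩, hbm⟩ := hmT
  have hm1 : 1 ≤ m := hm0
  have hmax : ∀ k, m < k → k ≤ K → u < b k := by
    intro k hk hkK
    by_contra h
    push_neg at h
    have hkT : k ∈ (Finset.Ioc 0 K).filter (fun k => b k ≤ u) :=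
      Finset.mem_filter.mpr ⟨Finset.mem_Ioc.mpr ⟨by omega, hkK⟩, h⟩
    exact absurd (hmax' k hkT) (by omega)
  -- coefficient bound
  have habs : ∀ k, 1 ≤ k → k ≤ K → |a k| ≤ C * δ ^ p := by
    intro k h1 hkK
    rcases eq_or_lt_of_le h1 with h | h
    · rw [← h, ha 1 le_rfl (by omega)]
      simp [hb0]
      exact hCδ
    · rw [ha k h1 hkK]
      calc |g (b k) - g (b (k - 1))| ≤ C * |b k - b (k - 1)| ^ p := hg _ _
        _ ≤ C * δ ^ p := by
            refine mul_le_mul_of_nonneg_left ?_ hC.le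
            refine Real.rpow_le_rpow (abs_nonneg _) ?_ hp.le
            have hh := hgaphi (k - 1) (by omega) (by omega)
            have hk1 : k - 1 + 1 = k := by omega
            rw [hk1] at hh
            exact hh
  -- telescoping identity
  have htel : ∀ j, 1 ≤ j → j ≤ K → a 0 + ∑ k ∈ Finset.Ioc 0 j, a k = g (b j) := by
    intro j h1
    induction j with
    | zero => exact absurd h1 (by omega)
    | succ j ih =>
      intro hjK
      rcases Nat.eq_zero_or_pos j with hj0 | hj0
      · subst hj0
        rw [Finset.sum_Ioc_succ_top (le_refl 0)]
        simp [ha 1 le_rfl (by omega), ha0, hb0]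
      · rw [Finset.sum_Ioc_succ_top (Nat.zero_le j),
          ha (j + 1) (by omega) hjK, Nat.add_sub_cancel]
        have h2 := ih hj0 (by omega)
        linarith
  -- interpolation error
  have humδ : u - b m ≤ δ := by
    rcases Nat.eq_or_lt_of_le hmK with hmeq | hmlt
    · have h1 : u ≤ A * Real.sqrt d := huabs.2
      have h2 : b m = b K := by rw [hmeq]
      rw [h2]
      have := hbK
      rw [hδ]
      linarith
    · have h1 := hmax (m + 1) (by omega) (by omega)
      have h2 := hgaphi m hm1 (by omega)
      have h3 : b m < b (m + 1) := hmono m hm1 hmlt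
      rw [abs_of_pos (by linarith)] at h2
      linarith
  have hinterp : |g (b m) - g u| ≤ C * δ ^ p := by
    calc |g (b m) - g u| ≤ C * |b m - u| ^ p := hg _ _
      _ ≤ C * δ ^ p := by
          refine mul_le_mul_of_nonneg_left ?_ hC.le
          refine Real.rpow_le_rpow (abs_nonneg _) ?_ hp.le
          rw [abs_of_nonpos (by linarith)]
          linarith
  -- far-term bounds
  have hfar1 : ∀ k ∈ Finset.Ioc 0 (m - 1),
      |a k| * (1 - 1 / (1 + Real.exp (-(ρ * (u - b k)))))
        ≤ C * δ ^ p * Real.exp (-(ρ * ε)) := by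
    intro k hk
    rw [Finset.mem_Ioc] at hk
    have hk1 : 1 ≤ k := hk.1
    have hkm : k + 1 ≤ m := by omega
    have hga := hgaplo k hk1 (by omega)
    have hbb : b k < b (k + 1) := hmono k hk1 (by omega)
    rw [abs_of_pos (by linarith)] at hga
    have hbk : b (k + 1) ≤ b m := hble (k + 1) m (by omega) hkm hmK
    have hεu : ε ≤ u - b k := by linarith
    have h1 : 1 - 1 / (1 + Real.exp (-(ρ * (u - b k)))) ≤ Real.exp (-(ρ * (u - b k))) :=
      one_sub_sig_le_exp' _
    have h2 : Real.exp (-(ρ * (u - b k))) ≤ Real.exp (-(ρ * ε)) := by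
      apply Real.exp_le_exp.mpr
      have := mul_le_mul_of_nonneg_left hεu hρ.le
      linarith
    have h3 : 0 ≤ 1 - 1 / (1 + Real.exp (-(ρ * (u - b k)))) := by
      linarith [sig_le_one' (-(ρ * (u - b k)))]
    calc |a k| * (1 - 1 / (1 + Real.exp (-(ρ * (u - b k)))))
        ≤ (C * δ ^ p) * (1 - 1 / (1 + Real.exp (-(ρ * (u - b k))))) :=
          mul_le_mul_of_nonneg_right (habs k hk1 (by omega)) h3
      _ ≤ (C * δ ^ p) * Real.exp (-(ρ * ε)) :=
          mul_le_mul_of_nonneg_left (h1.trans h2) hCδ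
  have hfar2 : ∀ k ∈ Finset.Ioc (m + 1) K,
      |a k| * (1 / (1 + Real.exp (-(ρ * (u - b k)))))
        ≤ C * δ ^ p * Real.exp (-(ρ * ε)) := by
    intro k hk
    rw [Finset.mem_Ioc] at hk
    have hum1 : u < b (m + 1) := hmax (m + 1) (by omega) (by omega)
    have hga := hgaplo (m + 1) (by omega) (by omega)
    have hbb : b (m + 1) < b (m + 2) := hmono (m + 1) (by omega) (by omega)
    rw [abs_of_pos (by linarith)] at hga
    have hbk : b (m + 2) ≤ b k := hble (m + 2) k (by omega) (by omega) hk.2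
    have hεu : ε ≤ b k - u := by linarith
    have h1 : 1 / (1 + Real.exp (-(ρ * (u - b k)))) ≤ Real.exp (ρ * (u - b k)) :=
      sig_le_exp' _
    have h2 : Real.exp (ρ * (u - b k)) ≤ Real.exp (-(ρ * ε)) := by
      apply Real.exp_le_exp.mpr
      have := mul_le_mul_of_nonneg_left hεu hρ.le
      nlinarith
    calc |a k| * (1 / (1 + Real.exp (-(ρ * (u - b k)))))
        ≤ (C * δ ^ p) * (1 / (1 + Real.exp (-(ρ * (u - b k))))) :=
          mul_le_mul_of_nonneg_right (habs k (by omega) hk.2)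
            (sig_nonneg' _)
      _ ≤ (C * δ ^ p) * Real.exp (-(ρ * ε)) :=
          mul_le_mul_of_nonneg_left (h1.trans h2) hCδ
  -- main decomposition
  rw [show Finset.Icc 1 K = Finset.Ioc 0 K from Finset.Icc_add_one_left_eq_Ioc 0 K]
  rw [← Finset.sum_Ioc_consecutive
    (fun k => a k * (1 / (1 + Real.exp (-(ρ * (u - b k)))))) (Nat.zero_le m) hmK]
  have htelm := htel m hm1 hmK
  have hE : a 0 + ((∑ k ∈ Finset.Ioc 0 m, a k * (1 / (1 + Real.exp (-(ρ * (u - b k))))))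
        + (∑ k ∈ Finset.Ioc m K, a k * (1 / (1 + Real.exp (-(ρ * (u - b k))))))) - g u
      = (∑ k ∈ Finset.Ioc 0 m, a k * ((1 / (1 + Real.exp (-(ρ * (u - b k))))) - 1))
        + (∑ k ∈ Finset.Ioc m K, a k * (1 / (1 + Real.exp (-(ρ * (u - b k))))))
        + (g (b m) - g u) := by
    have hsub : (∑ k ∈ Finset.Ioc 0 m, a k * ((1 / (1 + Real.exp (-(ρ * (u - b k))))) - 1))
        = (∑ k ∈ Finset.Ioc 0 m, a k * (1 / (1 + Real.exp (-(ρ * (u - b k))))))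
          - ∑ k ∈ Finset.Ioc 0 m, a k := by
      rw [← Finset.sum_sub_distrib]
      exact Finset.sum_congr rfl fun k _ => by ring
    rw [hsub]
    linarith
  rw [hE]
  -- bound the three pieces
  have hT1 : |∑ k ∈ Finset.Ioc 0 m, a k * ((1 / (1 + Real.exp (-(ρ * (u - b k))))) - 1)|
      ≤ C * δ ^ p + ((m - 1 : ℕ) : ℝ) * (C * δ ^ p * Real.exp (-(ρ * ε))) := by
    obtain ⟨m', rfl⟩ : ∃ m', m = m' + 1 := ⟨m - 1, by omega⟩
    calc |∑ k ∈ Finset.Ioc 0 (m' + 1),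
            a k * ((1 / (1 + Real.exp (-(ρ * (u - b k))))) - 1)|
        ≤ ∑ k ∈ Finset.Ioc 0 (m' + 1),
            |a k * ((1 / (1 + Real.exp (-(ρ * (u - b k))))) - 1)| :=
          Finset.abs_sum_le_sum_abs _ _
      _ = ∑ k ∈ Finset.Ioc 0 (m' + 1),
            |a k| * (1 - 1 / (1 + Real.exp (-(ρ * (u - b k))))) := by
          refine Finset.sum_congr rfl fun k _ => ?_
          rw [abs_mul, abs_of_nonpos (show (1 / (1 + Real.exp (-(ρ * (u - b k)))) - 1 : ℝ) ≤ 0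
            from by linarith [sig_le_one' (-(ρ * (u - b k)))])]
          ring
      _ = (∑ k ∈ Finset.Ioc 0 m',
            |a k| * (1 - 1 / (1 + Real.exp (-(ρ * (u - b k)))))) +
            |a (m' + 1)| * (1 - 1 / (1 + Real.exp (-(ρ * (u - b (m' + 1)))))) :=
          Finset.sum_Ioc_succ_top (Nat.zero_le m') _
      _ ≤ ((m' : ℝ)) * (C * δ ^ p * Real.exp (-(ρ * ε))) + C * δ ^ p := by
          refine add_le_add ?_ ?_
          · have hs := Finset.sum_le_card_nsmul (Finset.Ioc 0 m')
              (fun k => |a k| * (1 - 1 / (1 + Real.exp (-(ρ * (u - b k))))))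
              (C * δ ^ p * Real.exp (-(ρ * ε))) (by
                intro k hk
                exact hfar1 k (by simpa [Nat.add_sub_cancel] using hk))
            rw [Nat.card_Ioc, Nat.sub_zero, nsmul_eq_mul] at hs
            exact hs
          · calc |a (m' + 1)| * (1 - 1 / (1 + Real.exp (-(ρ * (u - b (m' + 1))))))
                ≤ (C * δ ^ p) * 1 := by
                  refine mul_le_mul (habs (m' + 1) (by omega) (by omega)) ?_
                    (by linarith [sig_le_one' (-(ρ * (u - b (m' + 1))))]) hCδ
                  linarith [sig_nonneg' (-(ρ * (u - b (m' + 1))))]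
              _ = C * δ ^ p := mul_one _
      _ = C * δ ^ p + ((m' + 1 - 1 : ℕ) : ℝ) * (C * δ ^ p * Real.exp (-(ρ * ε))) := by
          rw [Nat.add_sub_cancel]; ring
  have hT2 : |∑ k ∈ Finset.Ioc m K, a k * (1 / (1 + Real.exp (-(ρ * (u - b k)))))|
      ≤ C * δ ^ p + ((K - m - 1 : ℕ) : ℝ) * (C * δ ^ p * Real.exp (-(ρ * ε))) := by
    rcases Nat.eq_or_lt_of_le hmK with hmeq | hmlt
    · rw [hmeq, Finset.Ioc_self, Finset.sum_empty, abs_zero]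
      positivity
    · rw [← Finset.sum_Ioc_consecutive
        (fun k => a k * (1 / (1 + Real.exp (-(ρ * (u - b k))))))
        (Nat.le_succ m) (by omega : m + 1 ≤ K)]
      have hone : (∑ k ∈ Finset.Ioc m (m + 1),
          a k * (1 / (1 + Real.exp (-(ρ * (u - b k))))))
          = a (m + 1) * (1 / (1 + Real.exp (-(ρ * (u - b (m + 1)))))) := by
        rw [Finset.sum_Ioc_succ_top (le_refl m), Finset.Ioc_self, Finset.sum_empty,
          zero_add]
      rw [hone]
      calc |a (m + 1) * (1 / (1 + Real.exp (-(ρ * (u - b (m + 1)))))) +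
              ∑ k ∈ Finset.Ioc (m + 1) K, a k * (1 / (1 + Real.exp (-(ρ * (u - b k)))))|
          ≤ |a (m + 1) * (1 / (1 + Real.exp (-(ρ * (u - b (m + 1))))))| +
              |∑ k ∈ Finset.Ioc (m + 1) K, a k * (1 / (1 + Real.exp (-(ρ * (u - b k)))))| :=
            abs_add_le _ _
        _ ≤ C * δ ^ p + ((K - m - 1 : ℕ) : ℝ) * (C * δ ^ p * Real.exp (-(ρ * ε))) := by
            refine add_le_add ?_ ?_
            · rw [abs_mul]
              calc |a (m + 1)| * |1 / (1 + Real.exp (-(ρ * (u - b (m + 1)))))|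
                  ≤ (C * δ ^ p) * 1 := by
                    refine mul_le_mul (habs (m + 1) (by omega) (by omega)) ?_
                      (abs_nonneg _) hCδ
                    rw [abs_of_nonneg (sig_nonneg' _)]
                    exact sig_le_one' _
                _ = C * δ ^ p := mul_one _
            · calc |∑ k ∈ Finset.Ioc (m + 1) K,
                    a k * (1 / (1 + Real.exp (-(ρ * (u - b k)))))|
                  ≤ ∑ k ∈ Finset.Ioc (m + 1) K,
                    |a k * (1 / (1 + Real.exp (-(ρ * (u - b k)))))| :=
                    Finset.abs_sum_le_sum_abs _ _
                _ ≤ ((K - m - 1 : ℕ) : ℝ) * (C * δ ^ p * Real.exp (-(ρ * ε))) := by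
                    have hs := Finset.sum_le_card_nsmul (Finset.Ioc (m + 1) K)
                      (fun k => |a k * (1 / (1 + Real.exp (-(ρ * (u - b k)))))|)
                      (C * δ ^ p * Real.exp (-(ρ * ε))) (by
                        intro k hk
                        show |a k * (1 / (1 + Real.exp (-(ρ * (u - b k)))))|
                          ≤ C * δ ^ p * Real.exp (-(ρ * ε))
                        rw [abs_mul, abs_of_nonneg (sig_nonneg' _)]
                        exact hfar2 k hk)
                    rw [Nat.card_Ioc, nsmul_eq_mul] at hs
                    exact hs
  have hcount : ((m - 1 : ℕ) : ℝ) + ((K - m - 1 : ℕ) : ℝ) ≤ (K : ℝ) - 1 := by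
    have h1 : (m - 1) + (K - m - 1) ≤ K - 1 := by omega
    calc ((m - 1 : ℕ) : ℝ) + ((K - m - 1 : ℕ) : ℝ)
        = (((m - 1) + (K - m - 1) : ℕ) : ℝ) := (Nat.cast_add _ _).symm
      _ ≤ ((K - 1 : ℕ) : ℝ) := by exact_mod_cast h1
      _ = (K : ℝ) - 1 := by rw [Nat.cast_sub (by omega : 1 ≤ K)]; norm_num
  have hmain : |(∑ k ∈ Finset.Ioc 0 m,
        a k * ((1 / (1 + Real.exp (-(ρ * (u - b k))))) - 1))
      + (∑ k ∈ Finset.Ioc m K, a k * (1 / (1 + Real.exp (-(ρ * (u - b k))))))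
      + (g (b m) - g u)|
      ≤ 3 * (C * δ ^ p) + ((K : ℝ) - 1) * (C * δ ^ p * Real.exp (-(ρ * ε))) := by
    calc |(∑ k ∈ Finset.Ioc 0 m, a k * ((1 / (1 + Real.exp (-(ρ * (u - b k))))) - 1))
          + (∑ k ∈ Finset.Ioc m K, a k * (1 / (1 + Real.exp (-(ρ * (u - b k))))))
          + (g (b m) - g u)|
        ≤ |(∑ k ∈ Finset.Ioc 0 m, a k * ((1 / (1 + Real.exp (-(ρ * (u - b k))))) - 1))|
          + |(∑ k ∈ Finset.Ioc m K, a k * (1 / (1 + Real.exp (-(ρ * (u - b k))))))|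
          + |g (b m) - g u| :=
          (abs_add_le _ _).trans (add_le_add_left (abs_add_le _ _) _)
      _ ≤ (C * δ ^ p + ((m - 1 : ℕ) : ℝ) * (C * δ ^ p * Real.exp (-(ρ * ε))))
          + (C * δ ^ p + ((K - m - 1 : ℕ) : ℝ) * (C * δ ^ p * Real.exp (-(ρ * ε))))
          + C * δ ^ p := add_le_add (add_le_add hT1 hT2) hinterp
      _ ≤ 3 * (C * δ ^ p) + ((K : ℝ) - 1) * (C * δ ^ p * Real.exp (-(ρ * ε))) := by
          nlinarith [hE0, hcount, (Nat.cast_nonneg (m - 1) : (0:ℝ) ≤ ((m - 1 : ℕ) : ℝ)),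
            (Nat.cast_nonneg (K - m - 1) : (0:ℝ) ≤ ((K - m - 1 : ℕ) : ℝ))]
  -- convert to the stated right-hand side
  have e1 : δ ^ p = (4 * A * Real.sqrt d) ^ p / ((K : ℝ) - 1) ^ p := by
    rw [hδ, Real.div_rpow (by positivity) hK1.le]
  have e2 : ((K : ℝ) - 1) ^ (1 - p) = ((K : ℝ) - 1) / ((K : ℝ) - 1) ^ p := by
    rw [Real.rpow_sub hK1, Real.rpow_one]
  have e3 : Real.exp (-(ρ * (A * Real.sqrt d) / ((n + 1) * ((K : ℝ) - 1))))
      = Real.exp (-(ρ * ε)) := by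
    rw [hε]; congr 1; ring
  calc |(∑ k ∈ Finset.Ioc 0 m,
        a k * ((1 / (1 + Real.exp (-(ρ * (u - b k))))) - 1))
      + (∑ k ∈ Finset.Ioc m K, a k * (1 / (1 + Real.exp (-(ρ * (u - b k))))))
      + (g (b m) - g u)|
      ≤ 3 * (C * δ ^ p) + ((K : ℝ) - 1) * (C * δ ^ p * Real.exp (-(ρ * ε))) := hmain
    _ = 3 * (4 * A * Real.sqrt d) ^ p * C / ((K : ℝ) - 1) ^ p
        + C * (4 * A * Real.sqrt d) ^ p * ((K : ℝ) - 1) ^ (1 - p)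
          * Real.exp (-(ρ * (A * Real.sqrt d) / ((n + 1) * ((K : ℝ) - 1)))) := by
        rw [e1, e2, e3]; ring
end

section
/- Fix x₁,…,xₙ ∈ ℝ^d, y₁,…,yₙ ∈ ℝ, K ∈ ℕ, c₁ > 0, and let σ be the logistic sigmoid. For weights a ∈ ℝ^{K+1}, b ∈ ℝ^{K(d+1)} define f_{a,b}(x) = Σ_{k=1}^K a_k·σ(Σ_{j=1}^d b_{k,j}x^{(j)} + b_{k,0}) + a₀ and F(a,b) = (1/n)Σ_{i=1}^n |f_{a,b}(x_i) − y_i|² + (c₁/n)Σ_{k=0}^K a_k². Then for every k ∈ {1,…,K} and j ∈ {0,…,d}, |∂F/∂b_{k,j}(a,b)| ≤ 2·√(F(a,b))·max{1, max_{i,l}|x_i^{(l)}|}·|a_k|·exp(−min_{i=1,…,n} |Σ_{j=1}^d b_{k,j}x_i^{(j)} + b_{k,0}|). -/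
open Finset Real

noncomputable def sg (u : ℝ) : ℝ := 1/(1+Real.exp (-u))

lemma sig_hasDerivAt (u : ℝ) :
    HasDerivAt (fun v => 1/(1+Real.exp (-v))) (Real.exp (-u)/(1+Real.exp (-u))^2) u := by
  have h1 : HasDerivAt (fun v : ℝ => 1 + Real.exp (-v)) (-Real.exp (-u)) u := by
    have h := (Real.hasDerivAt_exp (-u)).comp u (hasDerivAt_neg u)
    simpa [Function.comp, mul_comm] using h.const_add 1
  have hne : (1 + Real.exp (-u)) ≠ 0 := by positivity
  have h2 := h1.fun_inv hne
  simpa [one_div, neg_div] using h2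

lemma sig_deriv_bound (u : ℝ) :
    Real.exp (-u)/(1+Real.exp (-u))^2 ≤ Real.exp (-|u|) := by
  rcases le_or_gt 0 u with h | h
  · rw [abs_of_nonneg h]
    have h1 : (1:ℝ) ≤ (1+Real.exp (-u))^2 := by nlinarith [Real.exp_pos (-u)]
    calc Real.exp (-u)/(1+Real.exp (-u))^2 ≤ Real.exp (-u)/1 :=
          div_le_div_of_nonneg_left (Real.exp_pos _).le one_pos h1 |>.trans_eq rfl
      _ = Real.exp (-u) := div_one _
  · rw [abs_of_neg h, neg_neg]
    have hm : Real.exp u * Real.exp (-u) = 1 := by rw [← Real.exp_add]; simp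
    have h2 : Real.exp (-u) * Real.exp (-u) ≤ (1+Real.exp (-u))^2 := by
      nlinarith [Real.exp_pos (-u)]
    rw [div_le_iff₀ (by positivity)]
    nlinarith [Real.exp_pos u, Real.exp_pos (-u)]

lemma key_bound
    (n d K : ℕ) (hn : 0 < n) (hd : 0 < d)
    (x : Fin n → Fin d → ℝ) (y : Fin n → ℝ) (c₁ : ℝ) (hc₁ : 0 < c₁)
    (a : ℕ → ℝ) (b : Fin K → ℕ → ℝ)
    (F : (Fin K → ℕ → ℝ) → ℝ)
    (hF : ∀ b' : Fin K → ℕ → ℝ, F b' =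
      (1 / n) * ∑ i : Fin n,
        |(∑ k : Fin K, a (k + 1) *
            (1 / (1 + Real.exp (-((∑ j : Fin d, b' k (j + 1) * x i j) + b' k 0)))))
          + a 0 - y i| ^ 2
      + (c₁ / n) * ∑ k ∈ Finset.range (K + 1), (a k) ^ 2)
    (k : Fin K) (j : ℕ)
    (c : Fin n → ℝ)
    (hc : ∀ i, |c i| ≤ max 1 ((Finset.univ : Finset (Fin n × Fin d)).sup'
            ⟨(⟨0, hn⟩, ⟨0, hd⟩), Finset.mem_univ _⟩ fun q => |x q.1 q.2|))
    (harg : ∀ t : ℝ, ∀ i : Fin n,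
      (∑ j' : Fin d, (Function.update (b k) j t) ((j' : ℕ) + 1) * x i j')
        + (Function.update (b k) j t) 0
      = c i * (t - b k j) + ((∑ j' : Fin d, b k ((j' : ℕ) + 1) * x i j') + b k 0)) :
    |deriv (fun t => F (Function.update b k (Function.update (b k) j t))) (b k j)|
      ≤ 2 * Real.sqrt (F b)
        * max 1 ((Finset.univ : Finset (Fin n × Fin d)).sup'
            ⟨(⟨0, hn⟩, ⟨0, hd⟩), Finset.mem_univ _⟩ fun q => |x q.1 q.2|)
        * |a (k + 1)|
        * Real.exp (-((Finset.univ : Finset (Fin n)).inf' ⟨⟨0, hn⟩, Finset.mem_univ _⟩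
            fun i => |(∑ j : Fin d, b k (j + 1) * x i j) + b k 0|)) := by
  classical
  set M : ℝ := max 1 ((Finset.univ : Finset (Fin n × Fin d)).sup'
            ⟨(⟨0, hn⟩, ⟨0, hd⟩), Finset.mem_univ _⟩ fun q => |x q.1 q.2|) with hM
  set m : ℝ := ((Finset.univ : Finset (Fin n)).inf' ⟨⟨0, hn⟩, Finset.mem_univ _⟩
            fun i => |(∑ j : Fin d, b k (j + 1) * x i j) + b k 0|) with hm
  have hM1 : (1:ℝ) ≤ M := le_max_left _ _
  have hM0 : (0:ℝ) ≤ M := zero_le_one.trans hM1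
  set z : Fin n → ℝ := fun i => (∑ j' : Fin d, b k ((j' : ℕ) + 1) * x i j') + b k 0 with hz
  set S : Fin n → ℝ := fun i => ∑ k' ∈ Finset.univ.erase k,
      a ((k' : ℕ) + 1) * sg ((∑ j' : Fin d, b k' ((j' : ℕ) + 1) * x i j') + b k' 0) with hS
  set E : Fin n → ℝ := fun i => S i + a ((k : ℕ) + 1) * sg (z i) + a 0 - y i with hE
  -- splitting the sum over neurons, for updated weights
  have hsplit : ∀ (v : ℕ → ℝ) (i : Fin n),
      (∑ k' : Fin K, a ((k' : ℕ) + 1) *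
          (1 / (1 + Real.exp (-((∑ j' : Fin d,
            (Function.update b k v) k' ((j' : ℕ) + 1) * x i j')
            + (Function.update b k v) k' 0)))))
      = a ((k : ℕ) + 1) * sg ((∑ j' : Fin d, v ((j' : ℕ) + 1) * x i j') + v 0) + S i := by
    intro v i
    rw [← Finset.add_sum_erase _ _ (Finset.mem_univ k)]
    congr 1
    · simp [Function.update_self, sg]
    · refine Finset.sum_congr rfl fun k' hk' => ?_
      rw [Function.update_of_ne (Finset.mem_erase.mp hk').1]
      simp [sg]
  have hsplit0 : ∀ i : Fin n,
      (∑ k' : Fin K, a ((k' : ℕ) + 1) *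
          (1 / (1 + Real.exp (-((∑ j' : Fin d, b k' ((j' : ℕ) + 1) * x i j') + b k' 0)))))
      = a ((k : ℕ) + 1) * sg (z i) + S i := by
    intro i
    rw [← Finset.add_sum_erase _ _ (Finset.mem_univ k)]
    rfl
  -- explicit form of the function
  have hg : ∀ t, F (Function.update b k (Function.update (b k) j t))
      = (1/n) * ∑ i : Fin n,
          (S i + a ((k : ℕ) + 1) * sg (c i * (t - b k j) + z i) + a 0 - y i) ^ 2
        + (c₁ / n) * ∑ k ∈ Finset.range (K + 1), (a k) ^ 2 := by
    intro t
    rw [hF]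
    congr 1
    congr 1
    refine Finset.sum_congr rfl fun i _ => ?_
    rw [sq_abs, hsplit (Function.update (b k) j t) i, harg t i]
    ring
  have hgfun : (fun t => F (Function.update b k (Function.update (b k) j t)))
      = fun t => (1/n) * ∑ i : Fin n,
          (S i + a ((k : ℕ) + 1) * sg (c i * (t - b k j) + z i) + a 0 - y i) ^ 2
        + (c₁ / n) * ∑ k ∈ Finset.range (K + 1), (a k) ^ 2 := funext hg
  -- derivative
  have hder : HasDerivAt (fun t => F (Function.update b k (Function.update (b k) j t)))
      ((1/n) * ∑ i : Fin n,
        2 * E i * (a ((k : ℕ) + 1) * (Real.exp (-z i)/(1+Real.exp (-z i))^2 * c i)))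
      (b k j) := by
    rw [hgfun]
    have hterm : ∀ i : Fin n, HasDerivAt
        (fun t => (S i + a ((k : ℕ) + 1) * sg (c i * (t - b k j) + z i) + a 0 - y i) ^ 2)
        (2 * E i * (a ((k : ℕ) + 1) * (Real.exp (-z i)/(1+Real.exp (-z i))^2 * c i)))
        (b k j) := by
      intro i
      have l1 : HasDerivAt (fun t : ℝ => c i * (t - b k j) + z i) (c i) (b k j) := by
        simpa using (((hasDerivAt_id (b k j)).sub_const (b k j)).const_mul (c i)).add_const (z i)
      have l2 : HasDerivAt (fun t : ℝ => sg (c i * (t - b k j) + z i))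
          (Real.exp (-z i)/(1+Real.exp (-z i))^2 * c i) (b k j) := by
        have h0 := (sig_hasDerivAt (c i * (b k j - b k j) + z i)).comp (b k j) l1
        rw [show c i * (b k j - b k j) + z i = z i by ring] at h0
        exact h0
      have l3 := ((l2.const_mul (a ((k : ℕ) + 1))).const_add (S i)).add_const (a 0)
      have l4 := (l3.sub_const (y i)).fun_pow 2
      refine l4.congr_deriv ?_
      have hval : S i + a ((k : ℕ) + 1) * sg (c i * (b k j - b k j) + z i) + a 0 - y i = E i := by
        rw [show c i * (b k j - b k j) + z i = z i by ring]
      push_cast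
      rw [hval]
      ring
    have h2 := HasDerivAt.fun_sum (fun i (_ : i ∈ Finset.univ) => hterm i)
    exact (h2.const_mul ((1:ℝ)/n)).add_const _
  rw [hder.deriv]
  -- bound each term
  have hn' : (0:ℝ) < n := by exact_mod_cast hn
  have hterm_bd : ∀ i : Fin n,
      |2 * E i * (a ((k : ℕ) + 1) * (Real.exp (-z i)/(1+Real.exp (-z i))^2 * c i))|
      ≤ |E i| * (2 * |a ((k : ℕ) + 1)| * Real.exp (-m) * M) := by
    intro i
    have hsig : Real.exp (-z i)/(1+Real.exp (-z i))^2 ≤ Real.exp (-m) := by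
      refine (sig_deriv_bound (z i)).trans ?_
      apply Real.exp_le_exp.mpr
      simp only [neg_le_neg_iff]
      exact Finset.inf'_le _ (Finset.mem_univ i)
    have hsig0 : (0:ℝ) ≤ Real.exp (-z i)/(1+Real.exp (-z i))^2 := by positivity
    have hci : |c i| ≤ M := hc i
    calc |2 * E i * (a ((k : ℕ) + 1) * (Real.exp (-z i)/(1+Real.exp (-z i))^2 * c i))|
        = 2 * |E i| * (|a ((k : ℕ) + 1)| * ((Real.exp (-z i)/(1+Real.exp (-z i))^2) * |c i|)) := by
          rw [abs_mul, abs_mul, abs_mul, abs_mul, abs_two, abs_of_nonneg hsig0]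
      _ ≤ 2 * |E i| * (|a ((k : ℕ) + 1)| * (Real.exp (-m) * M)) := by
          gcongr
      _ = |E i| * (2 * |a ((k : ℕ) + 1)| * Real.exp (-m) * M) := by ring
  -- (1/n) Σ |E i| ≤ sqrt (F b)
  have hcs : (1/n : ℝ) * ∑ i : Fin n, |E i| ≤ Real.sqrt (F b) := by
    have hsq : ((1/n : ℝ) * ∑ i : Fin n, |E i|) ^ 2 ≤ (1/n : ℝ) * ∑ i : Fin n, (E i) ^ 2 := by
      have h1 : (∑ i : Fin n, |E i|) ^ 2 ≤ (n : ℝ) * ∑ i : Fin n, |E i| ^ 2 := by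
        simpa using sq_sum_le_card_mul_sum_sq (s := (Finset.univ : Finset (Fin n)))
          (f := fun i => |E i|)
      simp only [sq_abs] at h1
      rw [mul_pow]
      calc ((1/n:ℝ))^2 * (∑ i : Fin n, |E i|) ^ 2
          ≤ ((1/n:ℝ))^2 * ((n : ℝ) * ∑ i : Fin n, (E i) ^ 2) := by gcongr
        _ = (1/n : ℝ) * ∑ i : Fin n, (E i) ^ 2 := by field_simp
    have hFge : (1/n : ℝ) * ∑ i : Fin n, (E i) ^ 2 ≤ F b := by
      rw [hF b]
      have hpen : 0 ≤ (c₁ / n) * ∑ k ∈ Finset.range (K + 1), (a k) ^ 2 := by positivity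
      have heq : ∀ i : Fin n, |(∑ k' : Fin K, a ((k' : ℕ) + 1) *
            (1 / (1 + Real.exp (-((∑ j' : Fin d, b k' ((j' : ℕ) + 1) * x i j') + b k' 0)))))
          + a 0 - y i| ^ 2 = (E i) ^ 2 := by
        intro i
        rw [sq_abs, hsplit0 i]
        simp only [hE]
        ring
      rw [Finset.sum_congr rfl (fun i _ => heq i)]
      linarith
    have h0 : 0 ≤ (1/n : ℝ) * ∑ i : Fin n, |E i| := by positivity
    rw [Real.le_sqrt h0 (le_trans (by positivity) hFge)]
    exact hsq.trans hFge
  -- put it together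
  calc |(1/n : ℝ) * ∑ i : Fin n,
        2 * E i * (a ((k : ℕ) + 1) * (Real.exp (-z i)/(1+Real.exp (-z i))^2 * c i))|
      ≤ (1/n : ℝ) * ∑ i : Fin n,
        |2 * E i * (a ((k : ℕ) + 1) * (Real.exp (-z i)/(1+Real.exp (-z i))^2 * c i))| := by
        rw [abs_mul, abs_of_nonneg (by positivity : (0:ℝ) ≤ 1/(n:ℝ))]
        gcongr
        exact Finset.abs_sum_le_sum_abs _ _
    _ ≤ (1/n : ℝ) * ∑ i : Fin n, |E i| * (2 * |a ((k : ℕ) + 1)| * Real.exp (-m) * M) := by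
        have := Finset.sum_le_sum (fun i (_ : i ∈ (Finset.univ : Finset (Fin n))) => hterm_bd i)
        have h1n : (0:ℝ) ≤ 1/(n:ℝ) := by positivity
        exact mul_le_mul_of_nonneg_left this h1n
    _ = ((1/n : ℝ) * ∑ i : Fin n, |E i|) * (2 * |a ((k : ℕ) + 1)| * Real.exp (-m) * M) := by
        rw [← Finset.sum_mul]; ring
    _ ≤ Real.sqrt (F b) * (2 * |a ((k : ℕ) + 1)| * Real.exp (-m) * M) := by
        have hnn : (0:ℝ) ≤ 2 * |a ((k : ℕ) + 1)| * Real.exp (-m) * M := by positivity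
        exact mul_le_mul_of_nonneg_right hcs hnn
    _ = 2 * Real.sqrt (F b) * M * |a ((k : ℕ) + 1)| * Real.exp (-m) := by ring



open Finset Real in
theorem partial_derivative_inner_weight_bound
    (n d K : ℕ) (hn : 0 < n) (hd : 0 < d)
    (x : Fin n → Fin d → ℝ) (y : Fin n → ℝ) (c₁ : ℝ) (hc₁ : 0 < c₁)
    (a : ℕ → ℝ) (b : Fin K → ℕ → ℝ)
    (F : (Fin K → ℕ → ℝ) → ℝ)
    (hF : ∀ b' : Fin K → ℕ → ℝ, F b' =
      (1 / n) * ∑ i : Fin n,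
        |(∑ k : Fin K, a (k + 1) *
            (1 / (1 + Real.exp (-((∑ j : Fin d, b' k (j + 1) * x i j) + b' k 0)))))
          + a 0 - y i| ^ 2
      + (c₁ / n) * ∑ k ∈ Finset.range (K + 1), (a k) ^ 2)
    (k : Fin K) (j : ℕ) (hj : j ≤ d) :
    |deriv (fun t => F (Function.update b k (Function.update (b k) j t))) (b k j)|
      ≤ 2 * Real.sqrt (F b)
        * max 1 ((Finset.univ : Finset (Fin n × Fin d)).sup'
            ⟨(⟨0, hn⟩, ⟨0, hd⟩), Finset.mem_univ _⟩ fun q => |x q.1 q.2|)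
        * |a (k + 1)|
        * Real.exp (-((Finset.univ : Finset (Fin n)).inf' ⟨⟨0, hn⟩, Finset.mem_univ _⟩
            fun i => |(∑ j : Fin d, b k (j + 1) * x i j) + b k 0|)) := by
  rcases Nat.eq_zero_or_pos j with rfl | hjpos
  · refine key_bound n d K hn hd x y c₁ hc₁ a b F hF k 0 (fun _ => 1) ?_ ?_
    · intro i; simpa using le_max_left 1 _
    · intro t i
      have h0 : (Function.update (b k) 0 t) 0 = t := Function.update_self _ _ _
      have hsum : ∑ j' : Fin d, (Function.update (b k) 0 t) ((j' : ℕ) + 1) * x i j'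
          = ∑ j' : Fin d, b k ((j' : ℕ) + 1) * x i j' := by
        refine Finset.sum_congr rfl fun j' _ => ?_
        rw [Function.update_of_ne (Nat.succ_ne_zero _)]
      rw [h0, hsum]
      ring
  · obtain ⟨j₀, rfl⟩ : ∃ j₀, j = j₀ + 1 := ⟨j - 1, (Nat.succ_pred_eq_of_pos hjpos).symm⟩
    have hlt : j₀ < d := by omega
    refine key_bound n d K hn hd x y c₁ hc₁ a b F hF k (j₀ + 1)
      (fun i => x i ⟨j₀, hlt⟩) ?_ ?_
    · intro i
      exact le_max_of_le_right (Finset.le_sup' (fun q : Fin n × Fin d => |x q.1 q.2|)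
        (Finset.mem_univ (i, ⟨j₀, hlt⟩)))
    · intro t i
      have h0 : (Function.update (b k) (j₀ + 1) t) 0 = b k 0 :=
        Function.update_of_ne (by omega) _ _
      have hsum : ∑ j' : Fin d, (Function.update (b k) (j₀ + 1) t) ((j' : ℕ) + 1) * x i j'
          = t * x i ⟨j₀, hlt⟩
            + ∑ j' ∈ Finset.univ.erase (⟨j₀, hlt⟩ : Fin d), b k ((j' : ℕ) + 1) * x i j' := by
        rw [← Finset.add_sum_erase _ _ (Finset.mem_univ (⟨j₀, hlt⟩ : Fin d))]
        congr 1
        · simp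
        · refine Finset.sum_congr rfl fun j' hj' => ?_
          rw [Function.update_of_ne (show ((j' : ℕ) + 1) ≠ j₀ + 1 from
            fun h => (Finset.mem_erase.mp hj').1 (Fin.ext (by simp only [Fin.val_mk]; omega)))]
      have hsum2 : ∑ j' : Fin d, b k ((j' : ℕ) + 1) * x i j'
          = b k (j₀ + 1) * x i ⟨j₀, hlt⟩
            + ∑ j' ∈ Finset.univ.erase (⟨j₀, hlt⟩ : Fin d), b k ((j' : ℕ) + 1) * x i j' := by
        rw [← Finset.add_sum_erase _ _ (Finset.mem_univ (⟨j₀, hlt⟩ : Fin d))]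
      rw [h0, hsum, hsum2]
      ring
end

section
/- Consider gradient descent (a^{(t+1)}, b^{(t+1)}) = (a^{(t)}, b^{(t)}) − λ·∇F(a^{(t)}, b^{(t)}) on the penalized risk F of a one-hidden-layer logistic network. Assume for all t ∈ {0,…,T−1}: F(a^{(t)}, b^{(t)}) ≤ c₅, ‖a^{(t)}‖² ≤ c₆·n, the initial inner weights satisfy min_{i,k} |Σ_j b_{k,j}^{(0)} x_i^{(j)} + b_{k,0}^{(0)}| ≥ δ > 0, and (d+1)·T·λ·2√c₅·max{1, max_{i,l}|x_i^{(l)}|²}·√(c₆n)·exp(−δ/2) ≤ δ/2. Then for every k, every j ∈ {0,…,d}, and every t ∈ {1,…,T}, |b_{k,j}^{(t)} − b_{k,j}^{(t−1)}| ≤ λ·2√c₅·max{1, max_{i,l}|x_i^{(l)}|}·√(c₆n)·exp(−δ/2). -/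
open Finset Real

noncomputable def sig (x : ℝ) : ℝ := 1 / (1 + Real.exp (-x))
noncomputable def sigd (x : ℝ) : ℝ := Real.exp (-x) / (1 + Real.exp (-x)) ^ 2

lemma sig_def (x : ℝ) : sig x = 1 / (1 + Real.exp (-x)) := rfl

lemma sig_hasDerivAt_s11 (x : ℝ) : HasDerivAt sig (sigd x) x := by
  have hpos : (0:ℝ) < 1 + Real.exp (-x) := by positivity
  have h1 : HasDerivAt (fun y : ℝ => 1 + Real.exp (-y)) (-Real.exp (-x)) x := by
    have h := (Real.hasDerivAt_exp (-x)).comp x (hasDerivAt_neg x)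
    simpa using h.const_add 1
  have h2 := h1.inv hpos.ne'
  have hfun : sig = fun y : ℝ => (1 + Real.exp (-y))⁻¹ := by
    funext y; simp [sig, one_div]
  rw [hfun]
  convert h2 using 1
  · rfl
  · rfl
  · rfl
  unfold sigd; ring

lemma sigd_nonneg (x : ℝ) : 0 ≤ sigd x := by
  unfold sigd; positivity

lemma sigd_le (x : ℝ) : sigd x ≤ Real.exp (-|x|) := by
  unfold sigd
  rcases le_or_gt 0 x with h | h
  · rw [abs_of_nonneg h]
    have h1 : (1:ℝ) ≤ (1 + Real.exp (-x)) ^ 2 := by nlinarith [Real.exp_pos (-x)]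
    calc Real.exp (-x) / (1 + Real.exp (-x)) ^ 2 ≤ Real.exp (-x) / 1 := by
          apply div_le_div_of_nonneg_left (Real.exp_pos _).le (by norm_num) h1
      _ = Real.exp (-x) := by norm_num
  · rw [abs_of_neg h]
    have hu : (0:ℝ) < Real.exp (-x) := Real.exp_pos _
    have h1 : Real.exp (-x) ^ 2 ≤ (1 + Real.exp (-x)) ^ 2 := by nlinarith
    calc Real.exp (-x) / (1 + Real.exp (-x)) ^ 2 ≤ Real.exp (-x) / Real.exp (-x) ^ 2 := by
          apply div_le_div_of_nonneg_left hu.le (by positivity) h1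
      _ = (Real.exp (-x))⁻¹ := by field_simp [pow_two]
      _ = Real.exp (- -x) := by rw [← Real.exp_neg]

lemma deriv_bound_main
    (n d K : ℕ) (hn : 0 < n)
    (x : Fin n → Fin d → ℝ) (y : Fin n → ℝ) (c₁ : ℝ) (hc₁ : 0 < c₁)
    (a : ℕ → ℝ) (b : Fin K → ℕ → ℝ) (k : Fin K) (j : ℕ) (hj : j ≤ d)
    (c₅ c₆ δ M : ℝ) (hδ : 0 < δ) (hM1 : 1 ≤ M) (hMx : ∀ i l, |x i l| ≤ M)
    (hFb : (1 / n) * (∑ i : Fin n,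
        |(∑ k' : Fin K, a (k' + 1) * sig ((∑ j' : Fin d, b k' (j' + 1) * x i j') + b k' 0))
          + a 0 - y i| ^ 2)
        + (c₁ / n) * ∑ k' ∈ Finset.range (K + 1), (a k') ^ 2 ≤ c₅)
    (ha : ∑ k' ∈ Finset.range (K + 1), (a k') ^ 2 ≤ c₆ * n)
    (hz : ∀ i : Fin n, δ / 2 ≤ |(∑ j' : Fin d, b k (j' + 1) * x i j') + b k 0|) :
    |deriv (fun s => (1 / n) * (∑ i : Fin n,
        |(∑ k' : Fin K, a (k' + 1) * sig ((∑ j' : Fin d,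
            (Function.update b k (Function.update (b k) j s)) k' (j' + 1) * x i j')
          + (Function.update b k (Function.update (b k) j s)) k' 0))
          + a 0 - y i| ^ 2)
        + (c₁ / n) * ∑ k' ∈ Finset.range (K + 1), (a k') ^ 2) (b k j)|
      ≤ 2 * Real.sqrt c₅ * M * Real.sqrt (c₆ * n) * Real.exp (-δ / 2) := by
  have hn' : (0:ℝ) < n := by exact_mod_cast hn
  set s₀ := b k j with hs₀
  -- derivative of the inner affine map
  obtain ⟨c, hcM, hcd⟩ : ∃ c : Fin n → ℝ, (∀ i, |c i| ≤ M) ∧ ∀ i,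
      HasDerivAt (fun s => (∑ j' : Fin d, (Function.update (b k) j s) (j' + 1) * x i j')
        + (Function.update (b k) j s) 0) (c i) s₀ := by
    rcases j with _ | jm
    · 
      refine ⟨fun _ => 1, fun i => by simpa using hM1, fun i => ?_⟩
      have hfun : (fun s => (∑ j' : Fin d, (Function.update (b k) 0 s) (j' + 1) * x i j')
          + (Function.update (b k) 0 s) 0)
          = fun s => (∑ j' : Fin d, b k (j' + 1) * x i j') + s := by
        funext s
        simp [Function.update_of_ne (Nat.succ_ne_zero _)]
      rw [hfun]
      simpa using (hasDerivAt_id s₀).const_add (∑ j' : Fin d, b k (j' + 1) * x i j')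
    · have hm : jm < d := by omega
      refine ⟨fun i => x i ⟨jm, hm⟩, fun i => hMx i _, fun i => ?_⟩
      have hsum : HasDerivAt
          (fun s => ∑ j' : Fin d, (Function.update (b k) (jm + 1) s) (j' + 1) * x i j')
          (∑ j' : Fin d, if j' = (⟨jm, hm⟩ : Fin d) then x i j' else 0) s₀ := by
        apply HasDerivAt.fun_sum
        intro j' _
        by_cases hjj : j' = (⟨jm, hm⟩ : Fin d)
        · have hv : ((j' : ℕ) + 1) = jm + 1 := by rw [hjj]
          rw [if_pos hjj]
          have hfe : (fun s : ℝ => (Function.update (b k) (jm + 1) s) ((j' : ℕ) + 1) * x i j')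
              = fun s : ℝ => s * x i j' := by
            funext s; rw [hv, Function.update_self]
          rw [hfe]
          simpa using (hasDerivAt_id s₀).mul_const (x i j')
        · have hne : ((j' : ℕ) + 1) ≠ jm + 1 := by
            intro hcon
            exact hjj (Fin.ext (by simpa using hcon))
          simp only [Function.update_of_ne hne, if_neg hjj]
          exact hasDerivAt_const _ _
      have hsum' : (∑ j' : Fin d, if j' = (⟨jm, hm⟩ : Fin d) then x i j' else 0)
          = x i ⟨jm, hm⟩ := by simp
      rw [hsum'] at hsum
      have h0 : ∀ s : ℝ, (Function.update (b k) (jm + 1) s) 0 = b k 0 := by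
        intro s; apply Function.update_of_ne; omega
      have hfun : (fun s => (∑ j' : Fin d, (Function.update (b k) (jm + 1) s) (j' + 1) * x i j')
          + (Function.update (b k) (jm + 1) s) 0)
          = fun s => (∑ j' : Fin d, (Function.update (b k) (jm + 1) s) (j' + 1) * x i j')
            + b k 0 := by
        funext s; rw [h0]
      rw [hfun]
      exact hsum.add_const _
  set z : Fin n → ℝ := fun i => (∑ j' : Fin d, b k (j' + 1) * x i j') + b k 0 with hzdef
  set g : Fin n → ℝ := fun i =>
    (∑ k' : Fin K, a (k' + 1) * sig ((∑ j' : Fin d, b k' (j' + 1) * x i j') + b k' 0))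
      + a 0 - y i with hgdef
  have hupdself : Function.update b k (Function.update (b k) j s₀) = b := by
    rw [hs₀, Function.update_eq_self, Function.update_eq_self]
  -- derivative of each residual
  have hG : ∀ i : Fin n, HasDerivAt (fun s =>
      (∑ k' : Fin K, a (k' + 1) * sig ((∑ j' : Fin d,
          (Function.update b k (Function.update (b k) j s)) k' (j' + 1) * x i j')
        + (Function.update b k (Function.update (b k) j s)) k' 0))
        + a 0 - y i)
      (a ((k : ℕ) + 1) * (sigd (z i) * c i)) s₀ := by
    intro i
    have hsum : HasDerivAt (fun s =>
        ∑ k' : Fin K, a (k' + 1) * sig ((∑ j' : Fin d,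
            (Function.update b k (Function.update (b k) j s)) k' (j' + 1) * x i j')
          + (Function.update b k (Function.update (b k) j s)) k' 0))
        (∑ k' : Fin K, if k' = k then a ((k : ℕ) + 1) * (sigd (z i) * c i) else 0) s₀ := by
      apply HasDerivAt.fun_sum
      intro k' _
      by_cases hk : k' = k
      · subst hk
        simp only [Function.update_self, if_pos rfl]
        have hzval : (∑ j' : Fin d, (Function.update (b k') j s₀) (j' + 1) * x i j')
            + (Function.update (b k') j s₀) 0 = z i := by
          rw [hs₀, Function.update_eq_self]
        have hcd' : HasDerivAt (fun s => (∑ j' : Fin d,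
            (Function.update (b k') j s) (j' + 1) * x i j')
            + (Function.update (b k') j s) 0) (c i) s₀ := hcd i
        have hcomp := (sig_hasDerivAt_s11 _).comp s₀ hcd'
        rw [hzval] at hcomp
        have hmul := hcomp.const_mul (a ((k' : ℕ) + 1))
        exact hmul
      · simp only [Function.update_of_ne hk, if_neg hk]
        exact hasDerivAt_const _ _
    have hsum' : (∑ k' : Fin K, if k' = k then a ((k : ℕ) + 1) * (sigd (z i) * c i) else 0)
        = a ((k : ℕ) + 1) * (sigd (z i) * c i) := by simp
    rw [hsum'] at hsum
    exact (hsum.add_const (a 0)).sub_const (y i)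
  -- derivative of the full objective
  set D : ℝ := (1 / (n:ℝ)) * ∑ i : Fin n, 2 * g i * (a ((k : ℕ) + 1) * (sigd (z i) * c i)) with hDdef
  have hf : HasDerivAt (fun s => (1 / (n:ℝ)) * (∑ i : Fin n,
      ((∑ k' : Fin K, a (k' + 1) * sig ((∑ j' : Fin d,
          (Function.update b k (Function.update (b k) j s)) k' (j' + 1) * x i j')
        + (Function.update b k (Function.update (b k) j s)) k' 0))
        + a 0 - y i) ^ 2)
      + (c₁ / n) * ∑ k' ∈ Finset.range (K + 1), (a k') ^ 2) D s₀ := by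
    have hsum : HasDerivAt (fun s => ∑ i : Fin n,
        ((∑ k' : Fin K, a (k' + 1) * sig ((∑ j' : Fin d,
            (Function.update b k (Function.update (b k) j s)) k' (j' + 1) * x i j')
          + (Function.update b k (Function.update (b k) j s)) k' 0))
          + a 0 - y i) ^ 2)
        (∑ i : Fin n, 2 * g i * (a ((k : ℕ) + 1) * (sigd (z i) * c i))) s₀ := by
      apply HasDerivAt.fun_sum
      intro i _
      have hpow := (hG i).pow 2
      convert hpow using 1
      · rfl
      · rfl
      rw [hupdself]
      have : ((∑ k' : Fin K, a (k' + 1) * sig ((∑ j' : Fin d, b k' (j' + 1) * x i j') + b k' 0))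
          + a 0 - y i) = g i := rfl
      rw [this]
      push_cast
      ring
    exact (hsum.const_mul _).add_const _
  -- rewrite the goal derivative
  have hgoalfun : (fun s => (1 / (n:ℝ)) * (∑ i : Fin n,
      |(∑ k' : Fin K, a (k' + 1) * sig ((∑ j' : Fin d,
          (Function.update b k (Function.update (b k) j s)) k' (j' + 1) * x i j')
        + (Function.update b k (Function.update (b k) j s)) k' 0))
        + a 0 - y i| ^ 2)
      + (c₁ / n) * ∑ k' ∈ Finset.range (K + 1), (a k') ^ 2)
      = (fun s => (1 / (n:ℝ)) * (∑ i : Fin n,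
      ((∑ k' : Fin K, a (k' + 1) * sig ((∑ j' : Fin d,
          (Function.update b k (Function.update (b k) j s)) k' (j' + 1) * x i j')
        + (Function.update b k (Function.update (b k) j s)) k' 0))
        + a 0 - y i) ^ 2)
      + (c₁ / n) * ∑ k' ∈ Finset.range (K + 1), (a k') ^ 2) := by
    funext s
    simp only [sq_abs]
  rw [hgoalfun, hf.deriv]
  -- now bound D
  have hc₅0 : 0 ≤ c₅ := le_trans (by positivity) hFb
  have hE : ∀ i : Fin n, sigd (z i) ≤ Real.exp (-δ / 2) := by
    intro i
    refine le_trans (sigd_le _) ?_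
    rw [neg_div]
    exact Real.exp_le_exp.mpr (by simpa using neg_le_neg (hz i))
  have hA : |a ((k : ℕ) + 1)| ≤ Real.sqrt (c₆ * n) := by
    have h1 : (a ((k : ℕ) + 1)) ^ 2 ≤ c₆ * n := by
      refine le_trans (Finset.single_le_sum (f := fun k' => (a k') ^ 2)
        (fun _ _ => sq_nonneg _) ?_) ha
      simp [Nat.lt_succ_iff, k.isLt.le]
    have := Real.sqrt_le_sqrt h1
    rwa [Real.sqrt_sq_eq_abs] at this
  have hgsum : (1 / (n:ℝ)) * ∑ i : Fin n, |g i| ≤ Real.sqrt c₅ := by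
    have hpen : 0 ≤ (c₁ / n) * ∑ k' ∈ Finset.range (K + 1), (a k') ^ 2 := by positivity
    have h1 : (1 / (n:ℝ)) * ∑ i : Fin n, (g i) ^ 2 ≤ c₅ := by
      have : ∑ i : Fin n, (g i) ^ 2 = ∑ i : Fin n,
          |(∑ k' : Fin K, a (k' + 1) * sig ((∑ j' : Fin d, b k' (j' + 1) * x i j') + b k' 0))
          + a 0 - y i| ^ 2 := by
        apply Finset.sum_congr rfl; intro i _; rw [sq_abs]
      rw [this]; linarith
    have h2 : (∑ i : Fin n, |g i|) ^ 2 ≤ (n:ℝ) * ∑ i : Fin n, (g i) ^ 2 := by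
      have hcs := sq_sum_le_card_mul_sum_sq (s := (Finset.univ : Finset (Fin n)))
        (f := fun i => |g i|)
      simpa [sq_abs] using hcs
    have h3 : ((1 / (n:ℝ)) * ∑ i : Fin n, |g i|) ^ 2 ≤ c₅ := by
      rw [mul_pow]
      have h4 : ((1:ℝ)/n)^2 * (∑ i : Fin n, |g i|)^2 ≤ (1/n)^2 * ((n:ℝ) * ∑ i : Fin n, (g i)^2) := by
        apply mul_le_mul_of_nonneg_left h2 (by positivity)
      have h5 : ((1:ℝ)/n)^2 * ((n:ℝ) * ∑ i : Fin n, (g i)^2)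
          = (1/(n:ℝ)) * ∑ i : Fin n, (g i)^2 := by
        field_simp
      linarith
    have h6 := Real.sqrt_le_sqrt h3
    rwa [Real.sqrt_sq (by positivity)] at h6
  set C : ℝ := 2 * (Real.sqrt (c₆ * n) * (Real.exp (-δ / 2) * M)) with hCdef
  have hCnn : 0 ≤ C := by positivity
  have hterm : ∀ i : Fin n, |2 * g i * (a ((k : ℕ) + 1) * (sigd (z i) * c i))| ≤ |g i| * C := by
    intro i
    have e : |2 * g i * (a ((k : ℕ) + 1) * (sigd (z i) * c i))|
        = 2 * |g i| * (|a ((k : ℕ) + 1)| * (sigd (z i) * |c i|)) := by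
      simp [abs_mul, abs_of_nonneg (sigd_nonneg _), abs_two, mul_assoc]
    rw [e]
    calc 2 * |g i| * (|a ((k : ℕ) + 1)| * (sigd (z i) * |c i|))
        ≤ 2 * |g i| * (Real.sqrt (c₆ * n) * (Real.exp (-δ / 2) * M)) := by
          apply mul_le_mul_of_nonneg_left _ (by positivity)
          exact mul_le_mul hA (mul_le_mul (hE i) (hcM i) (abs_nonneg _) (Real.exp_pos _).le)
            (mul_nonneg (sigd_nonneg _) (abs_nonneg _)) (Real.sqrt_nonneg _)
      _ = |g i| * C := by rw [hCdef]; ring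
  calc |D| = (1 / (n:ℝ)) * |∑ i : Fin n, 2 * g i * (a ((k : ℕ) + 1) * (sigd (z i) * c i))| := by
        rw [hDdef, abs_mul, abs_of_nonneg (by positivity : (0:ℝ) ≤ 1 / (n:ℝ))]
    _ ≤ (1 / (n:ℝ)) * ∑ i : Fin n, |2 * g i * (a ((k : ℕ) + 1) * (sigd (z i) * c i))| := by
        apply mul_le_mul_of_nonneg_left (Finset.abs_sum_le_sum_abs _ _) (by positivity)
    _ ≤ (1 / (n:ℝ)) * ∑ i : Fin n, |g i| * C := by
        apply mul_le_mul_of_nonneg_left (Finset.sum_le_sum fun i _ => hterm i) (by positivity)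
    _ = ((1 / (n:ℝ)) * ∑ i : Fin n, |g i|) * C := by rw [← Finset.sum_mul]; ring
    _ ≤ Real.sqrt c₅ * C := mul_le_mul_of_nonneg_right hgsum hCnn
    _ = 2 * Real.sqrt c₅ * M * Real.sqrt (c₆ * n) * Real.exp (-δ / 2) := by
        rw [hCdef]; ring



open Finset Real in
theorem inner_weights_move_little
    (n d K : ℕ) (hn : 0 < n) (hd : 0 < d)
    (x : Fin n → Fin d → ℝ) (y : Fin n → ℝ) (c₁ : ℝ) (hc₁ : 0 < c₁)
    (F : (ℕ → ℝ) → (Fin K → ℕ → ℝ) → ℝ)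
    (hF : ∀ (a : ℕ → ℝ) (b : Fin K → ℕ → ℝ), F a b =
      (1 / n) * ∑ i : Fin n,
        |(∑ k : Fin K, a (k + 1) *
            (1 / (1 + Real.exp (-((∑ j : Fin d, b k (j + 1) * x i j) + b k 0)))))
          + a 0 - y i| ^ 2
      + (c₁ / n) * ∑ k ∈ Finset.range (K + 1), (a k) ^ 2)
    (a : ℕ → ℕ → ℝ) (b : ℕ → Fin K → ℕ → ℝ) (lam : ℝ) (hlam : 0 < lam)
    (T : ℕ) (c₅ c₆ δ : ℝ) (hδ : 0 < δ)
    (hupdate : ∀ t < T, ∀ (k : Fin K) (j : ℕ), j ≤ d →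
      b (t + 1) k j = b t k j
        - lam * deriv (fun s =>
            F (a t) (Function.update (b t) k (Function.update (b t k) j s))) (b t k j))
    (hFbound : ∀ t < T, F (a t) (b t) ≤ c₅)
    (habound : ∀ t < T, ∑ k ∈ Finset.range (K + 1), (a t k) ^ 2 ≤ c₆ * n)
    (hinit : ∀ (i : Fin n) (k : Fin K),
      δ ≤ |(∑ j : Fin d, b 0 k (j + 1) * x i j) + b 0 k 0|)
    (hsmall : (d + 1) * T * lam * 2 * Real.sqrt c₅
        * max 1 ((Finset.univ : Finset (Fin n × Fin d)).sup'
            ⟨(⟨0, hn⟩, ⟨0, hd⟩), Finset.mem_univ _⟩ fun q => |x q.1 q.2| ^ 2)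
        * Real.sqrt (c₆ * n) * Real.exp (-δ / 2) ≤ δ / 2) :
    ∀ (k : Fin K) (j t : ℕ), j ≤ d → 1 ≤ t → t ≤ T →
      |b t k j - b (t - 1) k j|
        ≤ lam * 2 * Real.sqrt c₅
          * max 1 ((Finset.univ : Finset (Fin n × Fin d)).sup'
              ⟨(⟨0, hn⟩, ⟨0, hd⟩), Finset.mem_univ _⟩ fun q => |x q.1 q.2|)
          * Real.sqrt (c₆ * n) * Real.exp (-δ / 2) := by
  have hn' : (0:ℝ) < n := by exact_mod_cast hn
  set Mr : ℝ := (Finset.univ : Finset (Fin n × Fin d)).sup'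
      ⟨(⟨0, hn⟩, ⟨0, hd⟩), Finset.mem_univ _⟩ (fun q => |x q.1 q.2|) with hMr
  set M : ℝ := max 1 Mr with hMdef
  have hM1 : 1 ≤ M := le_max_left _ _
  have hM0 : 0 ≤ M := by linarith
  have hMx : ∀ (i : Fin n) (l : Fin d), |x i l| ≤ M := by
    intro i l
    refine le_trans ?_ (le_max_right 1 Mr)
    rw [hMr]
    exact Finset.le_sup' (f := fun q : Fin n × Fin d => |x q.1 q.2|) (Finset.mem_univ (i, l))
  have hMr0 : 0 ≤ Mr := by
    refine le_trans (abs_nonneg (x ⟨0, hn⟩ ⟨0, hd⟩)) ?_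
    rw [hMr]
    exact Finset.le_sup' (f := fun q : Fin n × Fin d => |x q.1 q.2|)
      (Finset.mem_univ ((⟨0, hn⟩ : Fin n), (⟨0, hd⟩ : Fin d)))
  have hsup2 : ((Finset.univ : Finset (Fin n × Fin d)).sup'
      ⟨(⟨0, hn⟩, ⟨0, hd⟩), Finset.mem_univ _⟩ fun q => |x q.1 q.2| ^ 2) = Mr ^ 2 := by
    apply le_antisymm
    · apply Finset.sup'_le
      intro q hq
      have := Finset.le_sup' (f := fun q : Fin n × Fin d => |x q.1 q.2|) hq
      rw [← hMr] at this
      exact pow_le_pow_left₀ (abs_nonneg _) this 2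
    · obtain ⟨q, hq, hq2⟩ := Finset.exists_mem_eq_sup'
        (⟨(⟨0, hn⟩, ⟨0, hd⟩), Finset.mem_univ _⟩ :
          (Finset.univ : Finset (Fin n × Fin d)).Nonempty)
        (fun q => |x q.1 q.2|)
      rw [hMr, hq2]
      exact Finset.le_sup' (f := fun q : Fin n × Fin d => |x q.1 q.2| ^ 2) hq
  have hM2 : max 1 ((Finset.univ : Finset (Fin n × Fin d)).sup'
      ⟨(⟨0, hn⟩, ⟨0, hd⟩), Finset.mem_univ _⟩ fun q => |x q.1 q.2| ^ 2) = M ^ 2 := by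
    rw [hsup2, hMdef]
    rcases le_total Mr 1 with h | h
    · rw [max_eq_left (by nlinarith), max_eq_left h]; norm_num
    · rw [max_eq_right (by nlinarith), max_eq_right h]
  rw [hM2] at hsmall
  set S : ℝ := lam * 2 * Real.sqrt c₅ * M * Real.sqrt (c₆ * n) * Real.exp (-δ / 2) with hSdef
  have hS0 : 0 ≤ S := by
    rw [hSdef]
    have := Real.sqrt_nonneg c₅
    have := Real.sqrt_nonneg (c₆ * (n:ℝ))
    have := (Real.exp_pos (-δ / 2)).le
    positivity
  have hc0 : 0 ≤ ((d:ℝ) + 1) * M * S := by positivity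
  have hTot : (T:ℝ) * (((d:ℝ) + 1) * M * S) ≤ δ / 2 := by
    have e : (T:ℝ) * (((d:ℝ) + 1) * M * S)
        = ((d:ℝ) + 1) * T * lam * 2 * Real.sqrt c₅ * M ^ 2 * Real.sqrt (c₆ * n)
          * Real.exp (-δ / 2) := by
      rw [hSdef]; ring
    rw [e]; exact hsmall
  have hgap : ∀ t : ℕ, t ≤ T → δ / 2 ≤ δ - t * (((d:ℝ) + 1) * M * S) := by
    intro t ht
    have htr : (t:ℝ) ≤ T := by exact_mod_cast ht
    nlinarith [hTot, hc0]
  -- one-step bound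
  have hstep : ∀ t, t < T →
      (∀ (i : Fin n) (k' : Fin K),
        δ / 2 ≤ |(∑ j' : Fin d, b t k' (j' + 1) * x i j') + b t k' 0|) →
      ∀ (k' : Fin K) (jj : ℕ), jj ≤ d → |b (t + 1) k' jj - b t k' jj| ≤ S := by
    intro t ht hhalf k' jj hjj
    rw [hupdate t ht k' jj hjj]
    have heq : b t k' jj - lam * deriv (fun s =>
        F (a t) (Function.update (b t) k' (Function.update (b t k') jj s))) (b t k' jj)
        - b t k' jj
        = -(lam * deriv (fun s =>
        F (a t) (Function.update (b t) k' (Function.update (b t k') jj s))) (b t k' jj)) := by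
      ring
    rw [heq, abs_neg, abs_mul, abs_of_pos hlam]
    have hfun : (fun s => F (a t) (Function.update (b t) k' (Function.update (b t k') jj s)))
        = (fun s => (1 / (n:ℝ)) * (∑ i : Fin n,
          |(∑ kk : Fin K, a t (kk + 1) * sig ((∑ j2 : Fin d,
              (Function.update (b t) k' (Function.update (b t k') jj s)) kk (j2 + 1) * x i j2)
            + (Function.update (b t) k' (Function.update (b t k') jj s)) kk 0))
            + a t 0 - y i| ^ 2)
          + (c₁ / (n:ℝ)) * ∑ kk ∈ Finset.range (K + 1), (a t kk) ^ 2) := by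
      funext s
      rw [hF]
      rfl
    rw [hfun]
    have hFb' : (1 / (n:ℝ)) * (∑ i : Fin n,
        |(∑ kk : Fin K, a t (kk + 1) * sig ((∑ j2 : Fin d, b t kk (j2 + 1) * x i j2)
          + b t kk 0)) + a t 0 - y i| ^ 2)
        + (c₁ / (n:ℝ)) * ∑ kk ∈ Finset.range (K + 1), (a t kk) ^ 2 ≤ c₅ := by
      have h := hFbound t ht
      rw [hF] at h
      exact h
    have hd := deriv_bound_main n d K hn x y c₁ hc₁ (a t) (b t) k' jj hjj c₅ c₆ δ M hδ hM1 hMx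
      hFb' (habound t ht) (fun i => hhalf i k')
    calc lam * |deriv (fun s => (1 / (n:ℝ)) * (∑ i : Fin n,
          |(∑ kk : Fin K, a t (kk + 1) * sig ((∑ j2 : Fin d,
              (Function.update (b t) k' (Function.update (b t k') jj s)) kk (j2 + 1) * x i j2)
            + (Function.update (b t) k' (Function.update (b t k') jj s)) kk 0))
            + a t 0 - y i| ^ 2)
          + (c₁ / (n:ℝ)) * ∑ kk ∈ Finset.range (K + 1), (a t kk) ^ 2) (b t k' jj)|
        ≤ lam * (2 * Real.sqrt c₅ * M * Real.sqrt (c₆ * n) * Real.exp (-δ / 2)) :=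
          mul_le_mul_of_nonneg_left hd hlam.le
      _ = S := by rw [hSdef]; ring
  -- invariant
  have key : ∀ t : ℕ, t ≤ T → ∀ (i : Fin n) (k' : Fin K),
      δ - t * (((d:ℝ) + 1) * M * S)
        ≤ |(∑ j' : Fin d, b t k' (j' + 1) * x i j') + b t k' 0| := by
    intro t
    induction t with
    | zero => intro _ i k'; simpa using hinit i k'
    | succ t ih =>
      intro ht i k'
      have htT : t < T := by omega
      have ihh := ih (by omega)
      have hhalf : ∀ (i : Fin n) (k' : Fin K),
          δ / 2 ≤ |(∑ j' : Fin d, b t k' (j' + 1) * x i j') + b t k' 0| :=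
        fun i' k'' => le_trans (hgap t (by omega)) (ihh i' k'')
      have hst := hstep t htT hhalf
      have hzc : |((∑ j' : Fin d, b (t + 1) k' (j' + 1) * x i j') + b (t + 1) k' 0)
          - ((∑ j' : Fin d, b t k' (j' + 1) * x i j') + b t k' 0)|
          ≤ ((d:ℝ) + 1) * M * S := by
        have e : ((∑ j' : Fin d, b (t + 1) k' (j' + 1) * x i j') + b (t + 1) k' 0)
            - ((∑ j' : Fin d, b t k' (j' + 1) * x i j') + b t k' 0)
            = (∑ j' : Fin d, (b (t + 1) k' (j' + 1) - b t k' (j' + 1)) * x i j')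
              + (b (t + 1) k' 0 - b t k' 0) := by
          simp only [sub_mul, Finset.sum_sub_distrib]
          ring
        rw [e]
        calc |(∑ j' : Fin d, (b (t + 1) k' (j' + 1) - b t k' (j' + 1)) * x i j')
              + (b (t + 1) k' 0 - b t k' 0)|
            ≤ |∑ j' : Fin d, (b (t + 1) k' (j' + 1) - b t k' (j' + 1)) * x i j'|
              + |b (t + 1) k' 0 - b t k' 0| := abs_add_le _ _
          _ ≤ (∑ j' : Fin d, |(b (t + 1) k' (j' + 1) - b t k' (j' + 1)) * x i j'|)
              + |b (t + 1) k' 0 - b t k' 0| := by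
              gcongr
              exact Finset.abs_sum_le_sum_abs _ _
          _ ≤ (∑ _j' : Fin d, S * M) + S := by
              gcongr with j' hj'
              · rw [abs_mul]
                refine mul_le_mul (hst k' ((j' : ℕ) + 1) ?_) (hMx i j') (abs_nonneg _) hS0
                have := j'.isLt; omega
              · exact hst k' 0 (by omega)
          _ = (d:ℝ) * (S * M) + S := by
              rw [Finset.sum_const, Finset.card_univ, Fintype.card_fin, nsmul_eq_mul]
          _ ≤ ((d:ℝ) + 1) * M * S := by nlinarith [hS0, hM1, hM0]
      have htri := abs_sub_abs_le_abs_sub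
        ((∑ j' : Fin d, b t k' (j' + 1) * x i j') + b t k' 0)
        ((∑ j' : Fin d, b (t + 1) k' (j' + 1) * x i j') + b (t + 1) k' 0)
      rw [abs_sub_comm] at htri
      have h1 := ihh i k'
      have hexp : ((t:ℝ) + 1) * (((d:ℝ) + 1) * M * S)
          = (t:ℝ) * (((d:ℝ) + 1) * M * S) + ((d:ℝ) + 1) * M * S := by ring
      have hcast : (((t + 1 : ℕ)):ℝ) = (t:ℝ) + 1 := by push_cast; ring
      rw [hcast]
      linarith
  -- conclusion
  intro k j t hj ht1 htT
  obtain ⟨s, rfl⟩ : ∃ s, t = s + 1 := ⟨t - 1, by omega⟩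
  have hsT : s < T := by omega
  have hhalf : ∀ (i : Fin n) (k' : Fin K),
      δ / 2 ≤ |(∑ j' : Fin d, b s k' (j' + 1) * x i j') + b s k' 0| :=
    fun i k' => le_trans (hgap s (by omega)) (key s (by omega) i k')
  simp only [Nat.add_sub_cancel]
  exact hstep s hsT hhalf k j hj
end
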